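/- Let |ψ⟩ be a quantum state on registers C (holding T qubits) and R, of the form |ψ⟩ = (1/√(T+1)) Σ_{t=0}^{T} |unary(t)⟩_C ⊗ |φ_t⟩_R where unary(t) is the T-bit unary encoding of t. Let C_tr ⊆ {1,...,T} be a subset of clock qubit positions to be traced out. Then for any t ≠ t', the operator Tr_{C_tr}(|unary(t)⟩⟨unary(t')|) is nonzero only if for every i ∈ C_tr, either both t,t' > i or both t,t' < i. Consequently, Tr_{C_tr}(|ψ⟩⟨ψ|) is a convex combination Σ_j (|I_j|/(T+1)) Tr_{C_tr}(|Φ_{I_j}⟩⟨Φ_{I_j}|) over the maximal intervals I_1,...,I_ℓ of consecutive time steps contained in {0,...,T} determined by C_tr, where |Φ_I⟩ = (1/√|I|) Σ_{t∈I} |unary(t)⟩ ⊗ |φ_t⟩. -/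
import Mathlib


open Matrix Complex

noncomputable section

/-- The `T`-bit unary encoding of `t ∈ {0, …, T}`: the ℓ-th bit (0-indexed)
is `1` iff `ℓ < t`. -/
def unary {T : ℕ} (t : Fin (T + 1)) : Fin T → Fin 2 :=
  fun ℓ => if (ℓ : ℕ) < (t : ℕ) then 1 else 0

/-- Outer product `|u⟩⟨u|` of a vector. -/
def vecOuter {α : Type*} (u : α → ℂ) : Matrix α α ℂ :=
  Matrix.of fun x y => u x * star (u y)

/-- Partial trace over the clock qubits in `Ctr`, keeping the remaining clock
qubits and the register `r`. -/
def clockTraceOut {T : ℕ} {r : Type*} [Fintype r] (Ctr : Finset (Fin T))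
    (ρ : Matrix ((Fin T → Fin 2) × r) ((Fin T → Fin 2) × r) ℂ) :
    Matrix (({i : Fin T // i ∉ Ctr} → Fin 2) × r)
      (({i : Fin T // i ∉ Ctr} → Fin 2) × r) ℂ :=
  Matrix.of fun a b => ∑ z : {i : Fin T // i ∈ Ctr} → Fin 2,
    ρ (fun i => if h : i ∈ Ctr then z ⟨i, h⟩ else a.1 ⟨i, h⟩, a.2)
      (fun i => if h : i ∈ Ctr then z ⟨i, h⟩ else b.1 ⟨i, h⟩, b.2)

/-- The (normalized) restriction `|Φ_I⟩ = |I|^{-1/2} Σ_{t ∈ I} |unary(t)⟩ ⊗ |φ_t⟩`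
of a history state to a set `I` of time steps. -/
def intervalState {T : ℕ} {r : Type*} [Fintype r] (φ : Fin (T + 1) → r → ℂ)
    (I : Finset (Fin (T + 1))) : ((Fin T → Fin 2) × r) → ℂ :=
  fun p => ((Real.sqrt I.card : ℝ) : ℂ)⁻¹ *
    ∑ t ∈ I, (if p.1 = unary t then 1 else 0) * φ t p.2

/-- `t` and `t'` lie in the same maximal interval of `{0,…,T}` determined by the
traced-out clock positions `Ctr`: no position of `Ctr` separates them, i.e. their
unary encodings agree on `Ctr`. -/
def sameBlock {T : ℕ} (Ctr : Finset (Fin T)) (t t' : Fin (T + 1)) : Prop :=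
  ∀ i ∈ Ctr, ((i : ℕ) < (t : ℕ) ↔ (i : ℕ) < (t' : ℕ))

instance {T : ℕ} (Ctr : Finset (Fin T)) (t t' : Fin (T + 1)) :
    Decidable (sameBlock Ctr t t') := by
  unfold sameBlock; infer_instance

-- AUX

lemma sb_refl {T : ℕ} (Ctr : Finset (Fin T)) (t : Fin (T + 1)) : sameBlock Ctr t t :=
  fun _ _ => Iff.rfl

lemma sb_symm {T : ℕ} {Ctr : Finset (Fin T)} {t t' : Fin (T + 1)}
    (h : sameBlock Ctr t t') : sameBlock Ctr t' t := fun i hi => (h i hi).symm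

lemma sb_trans {T : ℕ} {Ctr : Finset (Fin T)} {a b c : Fin (T + 1)}
    (h1 : sameBlock Ctr a b) (h2 : sameBlock Ctr b c) : sameBlock Ctr a c :=
  fun i hi => (h1 i hi).trans (h2 i hi)

def emb {T : ℕ} (Ctr : Finset (Fin T)) (a : {i : Fin T // i ∉ Ctr} → Fin 2)
    (z : {i : Fin T // i ∈ Ctr} → Fin 2) : Fin T → Fin 2 :=
  fun i => if h : i ∈ Ctr then z ⟨i, h⟩ else a ⟨i, h⟩

lemma keyB {T : ℕ} {Ctr : Finset (Fin T)} {a b : {i : Fin T // i ∉ Ctr} → Fin 2}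
    {z : {i : Fin T // i ∈ Ctr} → Fin 2} {s s' : Fin (T + 1)}
    (ha : emb Ctr a z = unary s) (hb : emb Ctr b z = unary s') :
    sameBlock Ctr s s' := by
  intro i hi
  have h1 : unary s i = unary s' i := by
    rw [← ha, ← hb]; simp [emb, hi]
  unfold unary at h1
  by_cases h2 : (i : ℕ) < (s : ℕ) <;> by_cases h3 : (i : ℕ) < (s' : ℕ) <;>
    simp [h2, h3] at h1 ⊢

lemma block_eq {T : ℕ} {Ctr : Finset (Fin T)} {t t' : Fin (T + 1)}
    (h : sameBlock Ctr t t') :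
    (Finset.univ.filter fun u => sameBlock Ctr t u) =
      (Finset.univ.filter fun u => sameBlock Ctr t' u) := by
  ext u
  simp only [Finset.mem_filter, Finset.mem_univ, true_and]
  exact ⟨fun hu => sb_trans (sb_symm h) hu, fun hu => sb_trans h hu⟩

lemma card_block_ne {T : ℕ} (Ctr : Finset (Fin T)) (t : Fin (T + 1)) :
    (((Finset.univ.filter fun u => sameBlock Ctr t u).card : ℂ)) ≠ 0 := by
  have ht : t ∈ Finset.univ.filter fun u => sameBlock Ctr t u := by
    simp [sb_refl]
  simp only [ne_eq, Nat.cast_eq_zero, Finset.card_eq_zero]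
  exact fun h => by simp [h] at ht

lemma sum_W {T : ℕ} {Ctr : Finset (Fin T)} {s s' : Fin (T + 1)}
    (h : sameBlock Ctr s s') :
    ∑ t : Fin (T + 1),
      (((Finset.univ.filter fun u => sameBlock Ctr t u).card : ℂ))⁻¹ *
        ((if sameBlock Ctr t s then (1 : ℂ) else 0) *
          (if sameBlock Ctr t s' then (1 : ℂ) else 0)) = 1 := by
  have h1 : ∀ t : Fin (T + 1),
      (((Finset.univ.filter fun u => sameBlock Ctr t u).card : ℂ))⁻¹ *
        ((if sameBlock Ctr t s then (1 : ℂ) else 0) *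
          (if sameBlock Ctr t s' then (1 : ℂ) else 0)) =
      if sameBlock Ctr t s then
        (((Finset.univ.filter fun u => sameBlock Ctr s u).card : ℂ))⁻¹ else 0 := by
    intro t
    by_cases ht : sameBlock Ctr t s
    · have ht' : sameBlock Ctr t s' := sb_trans ht h
      rw [if_pos ht, if_pos ht, if_pos ht', block_eq ht, mul_one, mul_one]
    · simp [ht]
  rw [Finset.sum_congr rfl fun t _ => h1 t, Finset.sum_ite, Finset.sum_const,
    Finset.sum_const_zero, add_zero]
  have h2 : Finset.univ.filter (fun t => sameBlock Ctr t s) =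
      Finset.univ.filter fun u => sameBlock Ctr s u := by
    ext u; simp only [Finset.mem_filter, Finset.mem_univ, true_and]
    exact ⟨sb_symm, sb_symm⟩
  rw [h2, nsmul_eq_mul, mul_inv_cancel₀ (card_block_ne Ctr s)]

lemma cto_entry {T : ℕ} {r : Type*} [Fintype r] {Ctr : Finset (Fin T)}
    (φ : Fin (T + 1) → r → ℂ) (I : Finset (Fin (T + 1)))
    (a b : ({i : Fin T // i ∉ Ctr} → Fin 2) × r) :
    clockTraceOut Ctr (vecOuter (intervalState φ I)) a b =
      (I.card : ℂ)⁻¹ * ∑ z : {i : Fin T // i ∈ Ctr} → Fin 2, ∑ s ∈ I, ∑ s' ∈ I,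
        (if emb Ctr a.1 z = unary s then (1 : ℂ) else 0) *
          (if emb Ctr b.1 z = unary s' then (1 : ℂ) else 0) *
          (φ s a.2 * star (φ s' b.2)) := by
  simp only [clockTraceOut, vecOuter, intervalState, Matrix.of_apply]
  rw [Finset.mul_sum]
  refine Finset.sum_congr rfl fun z _ => ?_
  have hc : (((Real.sqrt I.card : ℝ) : ℂ))⁻¹ * star ((((Real.sqrt I.card : ℝ) : ℂ))⁻¹) =
      (I.card : ℂ)⁻¹ := by
    rw [← Complex.ofReal_inv, Complex.star_def, Complex.conj_ofReal,
      ← Complex.ofReal_mul, ← mul_inv, Real.mul_self_sqrt (Nat.cast_nonneg _),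
      Complex.ofReal_inv, Complex.ofReal_natCast]
  rw [star_mul', mul_mul_mul_comm, hc]
  congr 1
  rw [star_sum, Finset.sum_mul_sum]
  refine Finset.sum_congr rfl fun s _ => Finset.sum_congr rfl fun s' _ => ?_
  rw [star_mul']
  have : star (if emb Ctr b.1 z = unary s' then (1 : ℂ) else 0) =
      (if emb Ctr b.1 z = unary s' then (1 : ℂ) else 0) := by
    split_ifs <;> simp
  show (if emb Ctr a.1 z = unary s then (1 : ℂ) else 0) * φ s a.2 *
      (star (if emb Ctr b.1 z = unary s' then (1 : ℂ) else 0) * star (φ s' b.2)) = _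
  rw [this]; ring

/-- for a history state
`|ψ⟩ = (T+1)^{-1/2} Σ_t |unary(t)⟩_C ⊗ |φ_t⟩_R` and a set `C_tr` of traced-out
clock positions:
(1) for `t ≠ t'`, `Tr_{C_tr}(|unary(t)⟩⟨unary(t')| ⊗ |φ_t⟩⟨φ_{t'}|)` is nonzero
only if every `i ∈ C_tr` lies on the same side of both `t` and `t'`; and
(2) `Tr_{C_tr}(|ψ⟩⟨ψ|)` is the convex combination, with weights `|I_j|/(T+1)`,
of the states `Tr_{C_tr}(|Φ_{I_j}⟩⟨Φ_{I_j}|)` over the maximal intervals `I_j`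
determined by `C_tr` (equivalently, `(T+1)^{-1} Σ_t Tr_{C_tr}(|Φ_{B(t)}⟩⟨Φ_{B(t)}|)`
where `B(t)` is the maximal interval containing `t`). -/
theorem history_state_traceOut {T : ℕ} {r : Type*} [Fintype r]
    (φ : Fin (T + 1) → r → ℂ) (hφ : ∀ t, ∑ s, Complex.normSq (φ t s) = 1)
    (Ctr : Finset (Fin T)) :
    (∀ t t' : Fin (T + 1), t ≠ t' →
      clockTraceOut Ctr
          (Matrix.of fun p q =>
            ((if p.1 = unary t then (1 : ℂ) else 0) * φ t p.2) *
              star ((if q.1 = unary t' then (1 : ℂ) else 0) * φ t' q.2)) ≠ 0 →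
      sameBlock Ctr t t') ∧
    clockTraceOut Ctr (vecOuter (intervalState φ Finset.univ)) =
      (((T : ℂ) + 1))⁻¹ •
        ∑ t : Fin (T + 1),
          clockTraceOut Ctr
            (vecOuter (intervalState φ (Finset.univ.filter fun t' => sameBlock Ctr t t'))) := by
  constructor
  · intro t t' _ hnz
    by_contra hsb
    apply hnz
    ext p q
    simp only [clockTraceOut, Matrix.of_apply, Matrix.zero_apply]
    refine Finset.sum_eq_zero fun z _ => ?_
    by_cases h1 : emb Ctr p.1 z = unary t
    · by_cases h2 : emb Ctr q.1 z = unary t'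
      · exact absurd (keyB h1 h2) hsb
      · show (if emb Ctr p.1 z = unary t then (1 : ℂ) else 0) * φ t p.2 *
            star ((if emb Ctr q.1 z = unary t' then (1 : ℂ) else 0) * φ t' q.2) = 0
        simp [h2]
    · show (if emb Ctr p.1 z = unary t then (1 : ℂ) else 0) * φ t p.2 *
          star ((if emb Ctr q.1 z = unary t' then (1 : ℂ) else 0) * φ t' q.2) = 0
      simp [h1]
  · ext a b
    rw [cto_entry]
    simp only [Matrix.smul_apply, Matrix.sum_apply, smul_eq_mul]
    rw [Finset.sum_congr rfl fun t (_ : t ∈ Finset.univ) =>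
      cto_entry φ (Finset.univ.filter fun t' => sameBlock Ctr t t') a b]
    have hcard : ((Finset.univ : Finset (Fin (T + 1))).card : ℂ)⁻¹ = ((T : ℂ) + 1)⁻¹ := by
      rw [Finset.card_univ, Fintype.card_fin]; push_cast; ring
    rw [hcard]
    congr 1
    -- main sum identity
    have key : ∀ (z : {i : Fin T // i ∈ Ctr} → Fin 2) (s s' : Fin (T + 1)),
        ∑ t : Fin (T + 1),
          (((Finset.univ.filter fun u => sameBlock Ctr t u).card : ℂ))⁻¹ *
            ((if sameBlock Ctr t s then (1 : ℂ) else 0) *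
                (if sameBlock Ctr t s' then (1 : ℂ) else 0) *
              ((if emb Ctr a.1 z = unary s then (1 : ℂ) else 0) *
                  (if emb Ctr b.1 z = unary s' then (1 : ℂ) else 0) *
                (φ s a.2 * star (φ s' b.2)))) =
          (if emb Ctr a.1 z = unary s then (1 : ℂ) else 0) *
            (if emb Ctr b.1 z = unary s' then (1 : ℂ) else 0) *
            (φ s a.2 * star (φ s' b.2)) := by
      intro z s s'
      by_cases hP : emb Ctr a.1 z = unary s
      · by_cases hQ : emb Ctr b.1 z = unary s'
        · have hss' := keyB hP hQ
          have := sum_W hss'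
          calc ∑ t : Fin (T + 1),
                (((Finset.univ.filter fun u => sameBlock Ctr t u).card : ℂ))⁻¹ *
                  ((if sameBlock Ctr t s then (1 : ℂ) else 0) *
                      (if sameBlock Ctr t s' then (1 : ℂ) else 0) *
                    ((if emb Ctr a.1 z = unary s then (1 : ℂ) else 0) *
                        (if emb Ctr b.1 z = unary s' then (1 : ℂ) else 0) *
                      (φ s a.2 * star (φ s' b.2))))
              = (∑ t : Fin (T + 1),
                  (((Finset.univ.filter fun u => sameBlock Ctr t u).card : ℂ))⁻¹ *
                    ((if sameBlock Ctr t s then (1 : ℂ) else 0) *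
                      (if sameBlock Ctr t s' then (1 : ℂ) else 0))) *
                  ((if emb Ctr a.1 z = unary s then (1 : ℂ) else 0) *
                      (if emb Ctr b.1 z = unary s' then (1 : ℂ) else 0) *
                    (φ s a.2 * star (φ s' b.2))) := by
                rw [Finset.sum_mul]
                exact Finset.sum_congr rfl fun t _ => by ring
            _ = _ := by rw [this, one_mul]
        · simp [hQ]
      · simp [hP]
    calc ∑ z : {i : Fin T // i ∈ Ctr} → Fin 2, ∑ s ∈ Finset.univ, ∑ s' ∈ Finset.univ,
          (if emb Ctr a.1 z = unary s then (1 : ℂ) else 0) *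
            (if emb Ctr b.1 z = unary s' then (1 : ℂ) else 0) *
            (φ s a.2 * star (φ s' b.2))
        = ∑ z : {i : Fin T // i ∈ Ctr} → Fin 2, ∑ s : Fin (T + 1), ∑ s' : Fin (T + 1),
            ∑ t : Fin (T + 1),
              (((Finset.univ.filter fun u => sameBlock Ctr t u).card : ℂ))⁻¹ *
                ((if sameBlock Ctr t s then (1 : ℂ) else 0) *
                    (if sameBlock Ctr t s' then (1 : ℂ) else 0) *
                  ((if emb Ctr a.1 z = unary s then (1 : ℂ) else 0) *
                      (if emb Ctr b.1 z = unary s' then (1 : ℂ) else 0) *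
                    (φ s a.2 * star (φ s' b.2)))) := by
          refine Finset.sum_congr rfl fun z _ => Finset.sum_congr rfl fun s _ =>
            Finset.sum_congr rfl fun s' _ => ?_
          rw [key z s s']
      _ = ∑ t : Fin (T + 1),
            (((Finset.univ.filter fun u => sameBlock Ctr t u).card : ℂ))⁻¹ *
              ∑ z : {i : Fin T // i ∈ Ctr} → Fin 2,
                ∑ s ∈ Finset.univ.filter fun t' => sameBlock Ctr t t',
                  ∑ s' ∈ Finset.univ.filter fun t' => sameBlock Ctr t t',
                    (if emb Ctr a.1 z = unary s then (1 : ℂ) else 0) *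
                      (if emb Ctr b.1 z = unary s' then (1 : ℂ) else 0) *
                      (φ s a.2 * star (φ s' b.2)) := by
          have hfil : ∀ (t : Fin (T + 1)) (z : {i : Fin T // i ∈ Ctr} → Fin 2),
              (∑ s ∈ Finset.univ.filter fun t' => sameBlock Ctr t t',
                ∑ s' ∈ Finset.univ.filter fun t' => sameBlock Ctr t t',
                  (if emb Ctr a.1 z = unary s then (1 : ℂ) else 0) *
                    (if emb Ctr b.1 z = unary s' then (1 : ℂ) else 0) *
                    (φ s a.2 * star (φ s' b.2))) =
              ∑ s : Fin (T + 1), ∑ s' : Fin (T + 1),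
                (if sameBlock Ctr t s then (1 : ℂ) else 0) *
                    (if sameBlock Ctr t s' then (1 : ℂ) else 0) *
                  ((if emb Ctr a.1 z = unary s then (1 : ℂ) else 0) *
                      (if emb Ctr b.1 z = unary s' then (1 : ℂ) else 0) *
                    (φ s a.2 * star (φ s' b.2))) := by
            intro t z
            rw [Finset.sum_filter]
            refine Finset.sum_congr rfl fun s _ => ?_
            by_cases hs : sameBlock Ctr t s
            · rw [if_pos hs, Finset.sum_filter]
              refine Finset.sum_congr rfl fun s' _ => ?_
              by_cases hs' : sameBlock Ctr t s' <;> simp [hs, hs'] <;> ring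
            · simp [hs]
          have h2 : ∀ t : Fin (T + 1),
              (((Finset.univ.filter fun u => sameBlock Ctr t u).card : ℂ))⁻¹ *
                ∑ z : {i : Fin T // i ∈ Ctr} → Fin 2,
                  ∑ s ∈ Finset.univ.filter fun t' => sameBlock Ctr t t',
                    ∑ s' ∈ Finset.univ.filter fun t' => sameBlock Ctr t t',
                      (if emb Ctr a.1 z = unary s then (1 : ℂ) else 0) *
                        (if emb Ctr b.1 z = unary s' then (1 : ℂ) else 0) *
                        (φ s a.2 * star (φ s' b.2)) =
              ∑ z : {i : Fin T // i ∈ Ctr} → Fin 2, ∑ s : Fin (T + 1), ∑ s' : Fin (T + 1),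
                (((Finset.univ.filter fun u => sameBlock Ctr t u).card : ℂ))⁻¹ *
                  ((if sameBlock Ctr t s then (1 : ℂ) else 0) *
                      (if sameBlock Ctr t s' then (1 : ℂ) else 0) *
                    ((if emb Ctr a.1 z = unary s then (1 : ℂ) else 0) *
                        (if emb Ctr b.1 z = unary s' then (1 : ℂ) else 0) *
                      (φ s a.2 * star (φ s' b.2)))) := by
            intro t
            rw [Finset.sum_congr rfl fun z (_ : z ∈ Finset.univ) => hfil t z]
            simp only [Finset.mul_sum]
          rw [Finset.sum_congr rfl fun t (_ : t ∈ Finset.univ) => h2 t]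
          refine Eq.symm ?_
          conv_lhs => rw [Finset.sum_comm]
          refine Finset.sum_congr rfl fun z _ => ?_
          conv_lhs => rw [Finset.sum_comm]
          refine Finset.sum_congr rfl fun s _ => ?_
          conv_lhs => rw [Finset.sum_comm]
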